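/- Let D and F be nonempty HN data, let E be the semistable HN datum with single entry (rk(D) + rk(F), deg(D) + deg(F)), and let V be an HN datum such that: V strongly slopewise dominates D; V^∨ strongly slopewise dominates F^∨; HN(V) ≤ HN(D ⊕ F); and μ_max(D) < μ(E) < μ_min(F). Then δ(D, V) + δ(V, F) − δ(D, F) − δ(V, V) ≤ δ(D, F), with equality if and only if V = E. -/

import Mathlib

namespace HN

def slope (v : ℤ × ℤ) : ℚ := (v.2 : ℚ) / (v.1 : ℚ)

def cross (v w : ℤ × ℤ) : ℤ := v.1 * w.2 - v.2 * w.1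

def IsHNDatum (E : List (ℤ × ℤ)) : Prop :=
  (∀ v ∈ E, 1 ≤ v.1) ∧ E.Pairwise (fun v w => slope w < slope v)

def rk (E : List (ℤ × ℤ)) : ℤ := (E.map Prod.fst).sum

def deg (E : List (ℤ × ℤ)) : ℤ := (E.map Prod.snd).sum

def delta (E F : List (ℤ × ℤ)) : ℤ :=
  (E.map fun e => ((F.filter fun f => decide (slope e ≤ slope f)).map fun f => cross e f).sum).sum

def geSlope (E : List (ℤ × ℤ)) (μ : ℚ) : List (ℤ × ℤ) := E.filter fun v => decide (μ ≤ slope v)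
def gtSlope (E : List (ℤ × ℤ)) (μ : ℚ) : List (ℤ × ℤ) := E.filter fun v => decide (μ < slope v)
def ltSlope (E : List (ℤ × ℤ)) (μ : ℚ) : List (ℤ × ℤ) := E.filter fun v => decide (slope v < μ)

def sigmaList (E : List (ℤ × ℤ)) : List ℚ :=
  E.flatMap fun v => List.replicate v.1.toNat (slope v)

def sigmaSlope (E : List (ℤ × ℤ)) (i : ℕ) : ℚ := (sigmaList E).getD (i - 1) 0

def poly (E : List (ℤ × ℤ)) (k : ℕ) : ℚ := ((sigmaList E).take k).sum

def polySum (A B : List (ℤ × ℤ)) (k : ℕ) : ℚ :=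
  (((sigmaList A ++ sigmaList B).mergeSort fun a b => decide (b ≤ a)).take k).sum

def SlopewiseDom (E F : List (ℤ × ℤ)) : Prop :=
  ∀ μ : ℚ, rk (geSlope F μ) ≤ rk (geSlope E μ)

def StrongSlopewiseDom (E F : List (ℤ × ℤ)) : Prop :=
  SlopewiseDom E F ∧ ∀ μ : ℚ, rk (geSlope E μ) = rk (geSlope F μ) → geSlope E μ = geSlope F μ

def dual (E : List (ℤ × ℤ)) : List (ℤ × ℤ) := (E.map fun v => (v.1, -v.2)).reverse

def HNleSum (E A B : List (ℤ × ℤ)) : Prop :=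
  rk E = rk A + rk B ∧ deg E = deg A + deg B ∧
    ∀ k : ℕ, (k : ℤ) ≤ rk E → poly E k ≤ polySum A B k

def HasVertex (V : List (ℤ × ℤ)) (j : ℕ) : Prop :=
  (j : ℤ) = rk V ∨ sigmaSlope V (j + 1) < sigmaSlope V j


def pos (t : ℚ) : ℚ := max t 0

lemma pos_nonneg (t : ℚ) : 0 ≤ pos t := le_max_right _ _

lemma pos_of_nonneg {t : ℚ} (h : 0 ≤ t) : pos t = t := max_eq_left h

lemma pos_of_nonpos {t : ℚ} (h : t ≤ 0) : pos t = 0 := max_eq_right h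

lemma le_pos (t : ℚ) : t ≤ pos t := le_max_left _ _

lemma pos_eq_add (t : ℚ) : pos t = t + pos (-t) := by
  rcases le_total t 0 with h | h
  · rw [pos_of_nonpos h, pos_of_nonneg (by linarith)]; ring
  · rw [pos_of_nonneg h, pos_of_nonpos (by linarith)]; ring

lemma pos_mono {s t : ℚ} (h : s ≤ t) : pos s ≤ pos t :=
  max_le_max h le_rfl

lemma pos_add_pos_neg (t : ℚ) : pos t + pos (-t) = |t| := by
  rcases le_total t 0 with h | h
  · rw [pos_of_nonpos h, pos_of_nonneg (by linarith), abs_of_nonpos h]; ring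
  · rw [pos_of_nonneg h, pos_of_nonpos (by linarith), abs_of_nonneg h]; ring

lemma pos_strict {μ z y : ℚ} (hz : μ < z) (hy : μ < y) : pos (z - y) < pos (z - μ) := by
  rw [show pos (z - μ) = z - μ from pos_of_nonneg (by linarith)]
  rcases le_total (z - y) 0 with h | h
  · rw [pos_of_nonpos h]; linarith
  · rw [pos_of_nonneg h]; linarith

lemma abs_split (μ z w : ℚ) :
    |w - z| = |pos (w - μ) - pos (z - μ)| + |pos (μ - w) - pos (μ - z)| := by
  rcases le_total z μ with hz | hz <;> rcases le_total w μ with hw | hw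
  · rw [pos_of_nonpos (by linarith), pos_of_nonpos (by linarith),
      pos_of_nonneg (by linarith), pos_of_nonneg (by linarith)]
    rcases le_total z w with h | h
    · rw [abs_of_nonneg (by linarith), abs_of_nonneg (by linarith), abs_of_nonpos (by linarith)]; ring
    · rw [abs_of_nonpos (by linarith), abs_of_nonpos (by linarith), abs_of_nonneg (by linarith)]; ring
  · rw [pos_of_nonneg (by linarith), pos_of_nonpos (by linarith),
      pos_of_nonpos (by linarith), pos_of_nonneg (by linarith)]
    rw [abs_of_nonneg (by linarith), abs_of_nonneg (by linarith), abs_of_nonpos (by linarith)]; ring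
  · rw [pos_of_nonpos (by linarith), pos_of_nonneg (by linarith),
      pos_of_nonneg (by linarith), pos_of_nonpos (by linarith)]
    rw [abs_of_nonpos (by linarith), abs_of_nonpos (by linarith), abs_of_nonneg (by linarith)]; ring
  · rw [pos_of_nonneg (by linarith), pos_of_nonneg (by linarith),
      pos_of_nonpos (by linarith), pos_of_nonpos (by linarith)]
    rcases le_total z w with h | h
    · rw [abs_of_nonneg (by linarith), abs_of_nonneg (by linarith)]; simp
    · rw [abs_of_nonpos (by linarith), abs_of_nonpos (by linarith)]; simp

lemma abs_sub_min {u v : ℚ} : |u - v| = u + v - 2 * min u v := by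
  rcases le_total u v with h | h
  · rw [abs_of_nonpos (by linarith), min_eq_left h]; ring
  · rw [abs_of_nonneg (by linarith), min_eq_right h]; ring

section lists

variable {α : Type*}

lemma lsum_add (l : List α) (f g : α → ℚ) :
    (l.map fun x => f x + g x).sum = (l.map f).sum + (l.map g).sum := by
  induction l with
  | nil => simp
  | cons a l ih => simp [ih]; ring

lemma lsum_sub (l : List α) (f g : α → ℚ) :
    (l.map fun x => f x - g x).sum = (l.map f).sum - (l.map g).sum := by
  induction l with
  | nil => simp
  | cons a l ih => simp [ih]; ring

lemma lsum_const (l : List α) (c : ℚ) :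
    (l.map fun _ => c).sum = (l.length : ℚ) * c := by
  induction l with
  | nil => simp
  | cons a l ih => simp [ih]; ring

lemma lsum_mul_left (l : List α) (c : ℚ) (f : α → ℚ) :
    (l.map fun x => c * f x).sum = c * (l.map f).sum := by
  induction l with
  | nil => simp
  | cons a l ih => simp [ih]; ring

lemma lsum_le (l : List α) (f g : α → ℚ) (h : ∀ x ∈ l, f x ≤ g x) :
    (l.map f).sum ≤ (l.map g).sum := by
  induction l with
  | nil => simp
  | cons a l ih =>
    simp only [List.map_cons, List.sum_cons]
    have h1 := h a (by simp)
    have h2 := ih (fun x hx => h x (by simp [hx]))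
    linarith

lemma lsum_congr (l : List α) (f g : α → ℚ) (h : ∀ x ∈ l, f x = g x) :
    (l.map f).sum = (l.map g).sum :=
  le_antisymm (lsum_le l f g fun x hx => (h x hx).le)
    (lsum_le l g f fun x hx => (h x hx).ge)

lemma lsum_lt (l : List α) (f g : α → ℚ) (h : ∀ x ∈ l, f x ≤ g x)
    {x₀ : α} (hx₀ : x₀ ∈ l) (hlt : f x₀ < g x₀) :
    (l.map f).sum < (l.map g).sum := by
  induction l with
  | nil => simp at hx₀
  | cons a l ih =>
    simp only [List.map_cons, List.sum_cons]
    rcases List.mem_cons.mp hx₀ with rfl | hx₀'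
    · have h2 := lsum_le l f g (fun x hx => h x (by simp [hx]))
      linarith
    · have h1 := h a (by simp)
      have h2 := ih (fun x hx => h x (by simp [hx])) hx₀'
      linarith

lemma lsum_nonneg (l : List α) (f : α → ℚ) (h : ∀ x ∈ l, 0 ≤ f x) :
    0 ≤ (l.map f).sum := by
  have := lsum_le l (fun _ => 0) f h
  simpa using this

lemma single_le_lsum (l : List α) (f : α → ℚ) (h : ∀ x ∈ l, 0 ≤ f x)
    {x₀ : α} (hx₀ : x₀ ∈ l) : f x₀ ≤ (l.map f).sum := by
  induction l with
  | nil => simp at hx₀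
  | cons a l ih =>
    simp only [List.map_cons, List.sum_cons]
    rcases List.mem_cons.mp hx₀ with rfl | hx₀'
    · have := lsum_nonneg l f (fun x hx => h x (by simp [hx]))
      linarith
    · have h1 := h a (by simp)
      have h2 := ih (fun x hx => h x (by simp [hx])) hx₀'
      linarith

lemma exists_pos_of_lsum_pos (l : List α) (f : α → ℚ) (h : 0 < (l.map f).sum) :
    ∃ x ∈ l, 0 < f x := by
  by_contra hc
  push_neg at hc
  have := lsum_le l f (fun _ => 0) hc
  simp at this
  linarith

lemma lsum_comm {β : Type*} (l : List α) (l' : List β) (f : α → β → ℚ) :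
    (l.map fun x => (l'.map fun y => f x y).sum).sum
      = (l'.map fun y => (l.map fun x => f x y).sum).sum := by
  induction l with
  | nil => simp [lsum_const]
  | cons a l ih =>
    simp only [List.map_cons, List.sum_cons, ih, ← lsum_add]

end lists

lemma lsum_affine2 {α : Type*} (l : List α) (f1 f2 : α → ℚ) (a1 a2 c : ℚ) :
    (l.map fun w => a1 * f1 w + a2 * f2 w + c).sum
      = a1 * (l.map f1).sum + a2 * (l.map f2).sum + (l.length : ℚ) * c := by
  rw [lsum_add _ (fun w => a1 * f1 w + a2 * f2 w) (fun _ => c),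
    lsum_add _ (fun w => a1 * f1 w) (fun w => a2 * f2 w),
    lsum_mul_left, lsum_mul_left, lsum_const]

lemma lsum_affine4 {α : Type*} (l : List α) (f1 f2 f3 f4 : α → ℚ) (a1 a2 a3 a4 c : ℚ) :
    (l.map fun w => a1 * f1 w + a2 * f2 w + a3 * f3 w + a4 * f4 w + c).sum
      = a1 * (l.map f1).sum + a2 * (l.map f2).sum + a3 * (l.map f3).sum
        + a4 * (l.map f4).sum + (l.length : ℚ) * c := by
  rw [lsum_add _ (fun w => a1 * f1 w + a2 * f2 w + a3 * f3 w + a4 * f4 w) (fun _ => c),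
    lsum_add _ (fun w => a1 * f1 w + a2 * f2 w + a3 * f3 w) (fun w => a4 * f4 w),
    lsum_add _ (fun w => a1 * f1 w + a2 * f2 w) (fun w => a3 * f3 w),
    lsum_add _ (fun w => a1 * f1 w) (fun w => a2 * f2 w),
    lsum_mul_left, lsum_mul_left, lsum_mul_left, lsum_mul_left, lsum_const]

def DL (A B : List ℚ) : ℚ := (A.map fun x => (B.map fun y => pos (y - x)).sum).sum

lemma DL_expand (X Y : List ℚ) :
    DL X Y = (X.length : ℚ) * Y.sum - (Y.length : ℚ) * X.sum
      + (X.map fun x => (Y.map fun y => pos (x - y)).sum).sum := by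
  have hinner : ∀ x : ℚ, (Y.map fun y => pos (y - x)).sum
      = (Y.sum - (Y.length : ℚ) * x) + (Y.map fun y => pos (x - y)).sum := by
    intro x
    have h1 : (Y.map fun y => pos (y - x)).sum
        = (Y.map fun y => (y - x) + pos (x - y)).sum := by
      apply lsum_congr
      intro y _
      rw [pos_eq_add (y - x), neg_sub]
    rw [h1, lsum_add _ (fun y => y - x) (fun y => pos (x - y))]
    have h2 : (Y.map fun y => y - x).sum = Y.sum - (Y.length : ℚ) * x := by
      rw [lsum_sub _ (fun y => y) (fun _ => x)]
      rw [List.map_id', lsum_const]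
    rw [h2]
  unfold DL
  rw [lsum_congr _ _ _ (fun x _ => hinner x),
    lsum_add _ (fun x => Y.sum - (Y.length : ℚ) * x) (fun x => (Y.map fun y => pos (x - y)).sum),
    lsum_sub _ (fun _ => Y.sum) (fun x => (Y.length : ℚ) * x),
    lsum_const, lsum_mul_left, List.map_id']

-- pointwise min bounds
lemma min_bound_p (μ z w : ℚ) :
    min (pos (z - μ)) (pos (w - μ)) ≤ (if μ < z then (1:ℚ) else 0) * pos (w - μ) := by
  by_cases hz : μ < z
  · rw [if_pos hz, one_mul]
    exact min_le_right _ _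
  · have h0 : pos (z - μ) = 0 := pos_of_nonpos (by push_neg at hz; linarith)
    rw [if_neg hz, zero_mul]
    exact le_trans (min_le_left _ _) (le_of_eq h0)

lemma key_pointwise (μ z w : ℚ) :
    (-2 * (if μ < z then (1:ℚ) else 0)) * pos (w - μ)
      + (-2 * (if z < μ then (1:ℚ) else 0)) * pos (μ - w)
      + 1 * pos (w - μ) + 1 * pos (μ - w)
      + (pos (z - μ) + pos (μ - z))
      ≤ pos (w - z) + pos (z - w) := by
  have e1 : pos (w - z) + pos (z - w) = |w - z| := by
    have := pos_add_pos_neg (w - z); rw [neg_sub] at this; exact this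
  have e2 : |w - z| = (pos (w - μ) + pos (z - μ) - 2 * min (pos (w - μ)) (pos (z - μ)))
      + (pos (μ - w) + pos (μ - z) - 2 * min (pos (μ - w)) (pos (μ - z))) := by
    rw [abs_split μ z w, abs_sub_min, abs_sub_min]
  have b1 := min_bound_p μ z w
  have b2 : min (pos (μ - z)) (pos (μ - w)) ≤ (if z < μ then (1:ℚ) else 0) * pos (μ - w) := by
    by_cases hz : z < μ
    · rw [if_pos hz, one_mul]
      exact min_le_right _ _
    · have h0 : pos (μ - z) = 0 := pos_of_nonpos (by push_neg at hz; linarith)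
      rw [if_neg hz, zero_mul]
      exact le_trans (min_le_left _ _) (le_of_eq h0)
  rw [min_comm (pos (w - μ)) (pos (z - μ)), min_comm (pos (μ - w)) (pos (μ - z))] at e2
  rw [e1, e2]
  linarith

theorem core (A B C : List ℚ) (μ : ℚ)
    (hA : ∀ x ∈ A, x < μ) (hB : ∀ y ∈ B, μ < y) (hBne : B ≠ [])
    (hlen : (C.length : ℚ) = (A.length : ℚ) + (B.length : ℚ))
    (hsum : C.sum = A.sum + B.sum)
    (hμ : C.sum = (C.length : ℚ) * μ) :
    DL A C + DL C B - DL A B - DL C C ≤ DL A B ∧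
      (DL A C + DL C B - DL A B - DL C C = DL A B ↔ ∀ z ∈ C, z = μ) := by
  set m : ℚ := (A.length : ℚ) with hm
  set n : ℚ := (B.length : ℚ) with hn
  set r : ℚ := (C.length : ℚ) with hr
  set T : ℚ := (C.map fun z => pos (z - μ)).sum with hT
  set T' : ℚ := (C.map fun z => pos (μ - z)).sum with hT'
  set R1 : ℚ := (A.map fun x => (C.map fun z => pos (x - z)).sum).sum with hR1
  set R2 : ℚ := (C.map fun z => (B.map fun y => pos (z - y)).sum).sum with hR2
  have hTnonneg : 0 ≤ T := lsum_nonneg _ _ (fun z _ => pos_nonneg _)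
  -- T = T'
  have hTT : T = T' := by
    have h1 : (C.map fun z => pos (z - μ) - pos (μ - z)).sum
        = (C.map fun z => z - μ).sum := by
      apply lsum_congr
      intro z _
      have := pos_eq_add (z - μ)
      rw [neg_sub] at this
      linarith
    rw [lsum_sub _ (fun z => pos (z - μ)) (fun z => pos (μ - z)),
      lsum_sub _ (fun z => z) (fun _ => μ), List.map_id', lsum_const] at h1
    rw [← hT, ← hT', ← hr] at h1
    have h2 : C.sum - r * μ = 0 := by rw [hμ]; ring
    linarith
  -- DL A B value
  have hAB : DL A B = m * B.sum - n * A.sum := by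
    rw [DL_expand, ← hm, ← hn]
    have h0 : (A.map fun x => (B.map fun y => pos (x - y)).sum).sum
        = (A.map fun _ => (0:ℚ)).sum := by
      apply lsum_congr
      intro x hx
      have h1 : (B.map fun y => pos (x - y)).sum = (B.map fun _ => (0:ℚ)).sum := by
        apply lsum_congr
        intro y hy
        exact pos_of_nonpos (by have := hA x hx; have := hB y hy; linarith)
      rw [h1, lsum_const]; ring
    rw [h0, lsum_const]
    ring
  -- key identity
  have hQ : DL A C + DL C B - DL A B - DL C C - DL A B = R1 + R2 - DL C C := by
    rw [DL_expand A C, DL_expand C B, hAB, ← hR1, ← hR2, ← hm, ← hn, ← hr]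
    linear_combination (m - n) * hsum + (B.sum - A.sum) * hlen
  -- bounds
  have hR1le : R1 ≤ m * T' := by
    have h1 : R1 ≤ (A.map fun _ => T').sum := by
      apply lsum_le
      intro x hx
      apply lsum_le
      intro z _
      exact pos_mono (by have := hA x hx; linarith)
    rw [lsum_const, ← hm] at h1
    exact h1
  have hR2le : R2 ≤ n * T := by
    have h1 : R2 ≤ (C.map fun z => n * pos (z - μ)).sum := by
      apply lsum_le
      intro z _
      have h2 : (B.map fun y => pos (z - y)).sum ≤ (B.map fun _ => pos (z - μ)).sum := by
        apply lsum_le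
        intro y hy
        exact pos_mono (by have := hB y hy; linarith)
      rw [lsum_const, ← hn] at h2
      exact h2
    rw [lsum_mul_left, ← hT] at h1
    exact h1
  -- DL C C lower bound
  have hCC : r * T ≤ DL C C := by
    set Pc : ℚ := (C.map fun z => if μ < z then (1:ℚ) else 0).sum with hPc
    set Qc : ℚ := (C.map fun z => if z < μ then (1:ℚ) else 0).sum with hQc
    have hPQ : Pc + Qc ≤ r := by
      have h1 : (C.map fun z => (if μ < z then (1:ℚ) else 0) + (if z < μ then (1:ℚ) else 0)).sum
          ≤ (C.map fun _ => (1:ℚ)).sum := by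
        apply lsum_le
        intro z _
        by_cases hz : μ < z
        · simp [hz, not_lt.mpr hz.le]
        · by_cases hz' : z < μ <;> simp [hz, hz']
      rw [lsum_add _ (fun z => if μ < z then (1:ℚ) else 0) (fun z => if z < μ then (1:ℚ) else 0),
        lsum_const, ← hPc, ← hQc, ← hr] at h1
      linarith
    have hswap : (C.map fun z => (C.map fun w => pos (z - w)).sum).sum = DL C C := by
      rw [lsum_comm]; rfl
    have houter : ∀ z ∈ C,
        (-2 * T) * (if μ < z then (1:ℚ) else 0) + (-2 * T') * (if z < μ then (1:ℚ) else 0)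
          + r * pos (z - μ) + r * pos (μ - z) + (T + T')
        ≤ (C.map fun w => pos (w - z) + pos (z - w)).sum := by
      intro z _
      have h1 : (C.map fun w =>
          (-2 * (if μ < z then (1:ℚ) else 0)) * pos (w - μ)
            + (-2 * (if z < μ then (1:ℚ) else 0)) * pos (μ - w)
            + 1 * pos (w - μ) + 1 * pos (μ - w)
            + (pos (z - μ) + pos (μ - z))).sum
          ≤ (C.map fun w => pos (w - z) + pos (z - w)).sum := by
        apply lsum_le
        intro w _
        exact key_pointwise μ z w
      rw [lsum_affine4 C (fun w => pos (w - μ)) (fun w => pos (μ - w))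
        (fun w => pos (w - μ)) (fun w => pos (μ - w)) _ _ _ _ _] at h1
      rw [← hT, ← hT', ← hr] at h1
      calc (-2 * T) * (if μ < z then (1:ℚ) else 0) + (-2 * T') * (if z < μ then (1:ℚ) else 0)
            + r * pos (z - μ) + r * pos (μ - z) + (T + T')
          = -2 * (if μ < z then (1:ℚ) else 0) * T + -2 * (if z < μ then (1:ℚ) else 0) * T'
            + 1 * T + 1 * T' + r * (pos (z - μ) + pos (μ - z)) := by ring
        _ ≤ _ := h1
    have hsum2 : (C.map fun z =>
        (-2 * T) * (if μ < z then (1:ℚ) else 0) + (-2 * T') * (if z < μ then (1:ℚ) else 0)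
          + r * pos (z - μ) + r * pos (μ - z) + (T + T')).sum
        ≤ (C.map fun z => (C.map fun w => pos (w - z) + pos (z - w)).sum).sum :=
      lsum_le _ _ _ houter
    rw [lsum_affine4 C (fun z => if μ < z then (1:ℚ) else 0) (fun z => if z < μ then (1:ℚ) else 0)
      (fun z => pos (z - μ)) (fun z => pos (μ - z)) _ _ _ _ _] at hsum2
    rw [← hPc, ← hQc, ← hT, ← hT', ← hr] at hsum2
    have hsplit : (C.map fun z => (C.map fun w => pos (w - z) + pos (z - w)).sum).sum
        = DL C C + DL C C := by
      have h1 : (C.map fun z => (C.map fun w => pos (w - z) + pos (z - w)).sum).sum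
          = (C.map fun z => (C.map fun w => pos (w - z)).sum
            + (C.map fun w => pos (z - w)).sum).sum := by
        apply lsum_congr
        intro z _
        exact lsum_add _ (fun w => pos (w - z)) (fun w => pos (z - w))
      rw [h1, lsum_add _ (fun z => (C.map fun w => pos (w - z)).sum)
        (fun z => (C.map fun w => pos (z - w)).sum), hswap]
      rfl
    rw [hsplit] at hsum2
    have hmul : T * (Pc + Qc) ≤ T * r := mul_le_mul_of_nonneg_left hPQ hTnonneg
    rw [← hTT] at hsum2
    nlinarith [hsum2, hmul]
  -- conclusion
  have hmain : R1 + R2 - DL C C ≤ 0 := by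
    have : m * T' + n * T - r * T = 0 := by
      rw [← hTT, hlen]; ring
    linarith
  constructor
  · linarith [hQ, hmain]
  constructor
  · -- equality implies constant
    intro heq
    by_contra hc
    push_neg at hc
    obtain ⟨z₀, hz₀C, hz₀⟩ := hc
    -- T > 0
    have hTpos : 0 < T := by
      rcases lt_or_gt_of_ne hz₀ with h | h
      · -- z₀ < μ, so T' > 0
        have h1 : 0 < pos (μ - z₀) := by
          rw [pos_of_nonneg (by linarith)]; linarith
        have h2 := single_le_lsum C (fun z => pos (μ - z)) (fun z _ => pos_nonneg _) hz₀C
        rw [← hT'] at h2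
        rw [hTT]; linarith
      · have h1 : 0 < pos (z₀ - μ) := by
          rw [pos_of_nonneg (by linarith)]; linarith
        have h2 := single_le_lsum C (fun z => pos (z - μ)) (fun z _ => pos_nonneg _) hz₀C
        rw [← hT] at h2
        linarith
    obtain ⟨z₁, hz₁C, hz₁⟩ := exists_pos_of_lsum_pos C (fun z => pos (z - μ)) (by rw [← hT]; exact hTpos)
    have hz₁μ : μ < z₁ := by
      by_contra h
      push_neg at h
      rw [pos_of_nonpos (by linarith)] at hz₁
      exact lt_irrefl 0 hz₁
    obtain ⟨b₀, hb₀⟩ := List.exists_mem_of_ne_nil B hBne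
    -- strict R2 bound
    have hR2lt : R2 < n * T := by
      have h1 : R2 < (C.map fun z => n * pos (z - μ)).sum := by
        apply lsum_lt C (fun z => (B.map fun y => pos (z - y)).sum) (fun z => n * pos (z - μ))
        · intro z _
          have h2 : (B.map fun y => pos (z - y)).sum ≤ (B.map fun _ => pos (z - μ)).sum := by
            apply lsum_le
            intro y hy
            exact pos_mono (by have := hB y hy; linarith)
          rw [lsum_const, ← hn] at h2
          exact h2
        · exact hz₁C
        · have h2 : (B.map fun y => pos (z₁ - y)).sum < (B.map fun _ => pos (z₁ - μ)).sum := by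
            apply lsum_lt B (fun y => pos (z₁ - y)) (fun _ => pos (z₁ - μ))
            · intro y hy
              exact pos_mono (by have := hB y hy; linarith)
            · exact hb₀
            · exact pos_strict hz₁μ (hB b₀ hb₀)
          rw [lsum_const, ← hn] at h2
          exact h2
      rw [lsum_mul_left, ← hT] at h1
      exact h1
    have hstrict : R1 + R2 - DL C C < 0 := by
      have h3 : m * T' + n * T - r * T = 0 := by
        rw [← hTT, hlen]; ring
      linarith
    linarith [hQ, hstrict, heq]
  · -- constant implies equality
    intro hconst
    have hR1z : R1 = 0 := by
      rw [hR1]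
      have h1 : (A.map fun x => (C.map fun z => pos (x - z)).sum).sum
          = (A.map fun _ => (0:ℚ)).sum := by
        apply lsum_congr
        intro x hx
        have h2 : (C.map fun z => pos (x - z)).sum = (C.map fun _ => (0:ℚ)).sum := by
          apply lsum_congr
          intro z hz
          rw [hconst z hz]
          exact pos_of_nonpos (by have := hA x hx; linarith)
        rw [h2, lsum_const]; ring
      rw [h1, lsum_const]; ring
    have hR2z : R2 = 0 := by
      rw [hR2]
      have h1 : (C.map fun z => (B.map fun y => pos (z - y)).sum).sum
          = (C.map fun _ => (0:ℚ)).sum := by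
        apply lsum_congr
        intro z hz
        have h2 : (B.map fun y => pos (z - y)).sum = (B.map fun _ => (0:ℚ)).sum := by
          apply lsum_congr
          intro y hy
          rw [hconst z hz]
          exact pos_of_nonpos (by have := hB y hy; linarith)
        rw [h2, lsum_const]; ring
      rw [h1, lsum_const]; ring
    have hCCz : DL C C = 0 := by
      unfold DL
      have h1 : (C.map fun x => (C.map fun y => pos (y - x)).sum).sum
          = (C.map fun _ => (0:ℚ)).sum := by
        apply lsum_congr
        intro x hx
        have h2 : (C.map fun y => pos (y - x)).sum = (C.map fun _ => (0:ℚ)).sum := by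
          apply lsum_congr
          intro y hy
          rw [hconst y hy, hconst x hx]
          exact pos_of_nonpos (by linarith)
        rw [h2, lsum_const]; ring
      rw [h1, lsum_const]; ring
    linarith [hQ, hR1z, hR2z, hCCz]

section glue

lemma lsum_intcast {α : Type*} (l : List α) (f : α → ℤ) :
    (((l.map f).sum : ℤ) : ℚ) = (l.map fun x => ((f x : ℤ) : ℚ)).sum := by
  induction l with
  | nil => simp
  | cons a l ih => simp only [List.map_cons, List.sum_cons, Int.cast_add, ih]

lemma lsum_filter_ite {α : Type*} (l : List α) (p : α → Prop) [DecidablePred p] (f : α → ℚ) :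
    ((l.filter fun x => decide (p x)).map f).sum = (l.map fun x => if p x then f x else 0).sum := by
  induction l with
  | nil => simp
  | cons a l ih =>
    by_cases h : p a
    · simp [List.filter_cons, h, ih]
    · simp [List.filter_cons, h, ih]

lemma slope_mem_sigmaList {X : List (ℤ × ℤ)} {v : ℤ × ℤ} (hv : v ∈ X) (h1 : 1 ≤ v.1) :
    slope v ∈ sigmaList X := by
  unfold sigmaList
  refine List.mem_flatMap.mpr ⟨v, hv, ?_⟩
  refine List.mem_replicate.mpr ⟨?_, rfl⟩
  omega

lemma eq_slope_of_mem {X : List (ℤ × ℤ)} {x : ℚ} (hx : x ∈ sigmaList X) :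
    ∃ v ∈ X, x = slope v := by
  obtain ⟨v, hv, hrep⟩ := List.mem_flatMap.mp hx
  exact ⟨v, hv, List.eq_of_mem_replicate hrep⟩

lemma rk_nil : rk ([] : List (ℤ × ℤ)) = 0 := rfl

lemma rk_cons (v : ℤ × ℤ) (X : List (ℤ × ℤ)) : rk (v :: X) = v.1 + rk X := by
  simp [rk]

lemma deg_cons (v : ℤ × ℤ) (X : List (ℤ × ℤ)) : deg (v :: X) = v.2 + deg X := by
  simp [deg]

lemma rk_nonneg {X : List (ℤ × ℤ)} (h1 : ∀ v ∈ X, 1 ≤ v.1) : 0 ≤ rk X := by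
  induction X with
  | nil => simp [rk_nil]
  | cons v X ih =>
    rw [rk_cons]
    have hv := h1 v (by simp)
    have := ih (fun w hw => h1 w (List.mem_cons_of_mem _ hw))
    omega

lemma one_le_rk {X : List (ℤ × ℤ)} (h1 : ∀ v ∈ X, 1 ≤ v.1) (hne : X ≠ []) : 1 ≤ rk X := by
  cases X with
  | nil => exact absurd rfl hne
  | cons v X =>
    rw [rk_cons]
    have hv := h1 v (by simp)
    have := rk_nonneg (fun w hw => h1 w (List.mem_cons_of_mem _ hw))
    omega

lemma sigma_length {X : List (ℤ × ℤ)} (h1 : ∀ v ∈ X, 1 ≤ v.1) :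
    ((sigmaList X).length : ℤ) = rk X := by
  induction X with
  | nil => simp [sigmaList, rk_nil]
  | cons v X ih =>
    have hv := h1 v (by simp)
    have ih' := ih (fun w hw => h1 w (List.mem_cons_of_mem _ hw))
    rw [rk_cons]
    unfold sigmaList
    rw [List.flatMap_cons, List.length_append, List.length_replicate]
    push_cast
    rw [Int.toNat_of_nonneg (by omega)]
    unfold sigmaList at ih'
    rw [ih']

lemma sigma_map_sum {X : List (ℤ × ℤ)} (h1 : ∀ v ∈ X, 1 ≤ v.1) (g : ℚ → ℚ) :
    ((sigmaList X).map g).sum = (X.map fun v => (v.1 : ℚ) * g (slope v)).sum := by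
  induction X with
  | nil => simp [sigmaList]
  | cons v X ih =>
    have hv := h1 v (by simp)
    have ih' := ih (fun w hw => h1 w (List.mem_cons_of_mem _ hw))
    unfold sigmaList
    rw [List.flatMap_cons, List.map_append, List.sum_append, List.map_replicate,
      List.sum_replicate, List.map_cons, List.sum_cons]
    unfold sigmaList at ih'
    rw [ih']
    congr 1
    rw [nsmul_eq_mul]
    congr 1
    have : ((v.1.toNat : ℤ) : ℚ) = (v.1 : ℚ) := by rw [Int.toNat_of_nonneg (by omega)]
    push_cast at this ⊢
    exact this

lemma sigma_sum {X : List (ℤ × ℤ)} (h1 : ∀ v ∈ X, 1 ≤ v.1) :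
    (sigmaList X).sum = (deg X : ℚ) := by
  have h := sigma_map_sum h1 (fun x => x)
  rw [List.map_id'] at h
  rw [h]
  unfold deg
  rw [lsum_intcast]
  apply lsum_congr
  intro v hv
  have hv1 : (v.1 : ℚ) ≠ 0 := by
    have := h1 v hv
    intro hc
    rw [Int.cast_eq_zero] at hc
    omega
  unfold slope
  field_simp

lemma delta_eq_DL {X Y : List (ℤ × ℤ)} (hX : ∀ v ∈ X, 1 ≤ v.1) (hY : ∀ v ∈ Y, 1 ≤ v.1) :
    ((delta X Y : ℤ) : ℚ) = DL (sigmaList X) (sigmaList Y) := by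
  unfold delta DL
  rw [lsum_intcast]
  rw [sigma_map_sum hX (fun x => (List.map (fun y => pos (y - x)) (sigmaList Y)).sum)]
  apply lsum_congr
  intro v hv
  rw [lsum_intcast]
  rw [lsum_filter_ite Y (fun f => slope v ≤ slope f) (fun f => ((cross v f : ℤ) : ℚ))]
  rw [sigma_map_sum hY (fun y => pos (y - slope v))]
  rw [← lsum_mul_left Y ((v.1 : ℚ)) (fun w => (w.1 : ℚ) * pos (slope w - slope v))]
  apply lsum_congr
  intro w hw
  have hv1 : (v.1 : ℚ) ≠ 0 := by
    have := hX v hv; intro hc; rw [Int.cast_eq_zero] at hc; omega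
  have hw1 : (w.1 : ℚ) ≠ 0 := by
    have := hY w hw; intro hc; rw [Int.cast_eq_zero] at hc; omega
  by_cases h : slope v ≤ slope w
  · rw [if_pos h]
    rw [pos_of_nonneg (by linarith)]
    unfold cross slope
    unfold slope at h
    push_cast
    field_simp
  · rw [if_neg h]
    rw [pos_of_nonpos (by push_neg at h; linarith)]
    ring

lemma head_max {X : List (ℤ × ℤ)} (hne : X ≠ [])
    (hp : X.Pairwise (fun v w => slope w < slope v)) :
    ∀ v ∈ X, slope v ≤ slope (X.head hne) := by
  cases X with
  | nil => exact absurd rfl hne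
  | cons d X =>
    intro v hv
    rcases List.mem_cons.mp hv with rfl | hv'
    · exact le_refl _
    · have := (List.pairwise_cons.mp hp).1 v hv'
      simp only [List.head_cons]
      linarith

lemma getLast_min : ∀ (X : List (ℤ × ℤ)) (hne : X ≠ [])
    (_ : X.Pairwise (fun v w => slope w < slope v)),
    ∀ v ∈ X, slope (X.getLast hne) ≤ slope v := by
  intro X
  induction X with
  | nil => intro hne; exact absurd rfl hne
  | cons f X ih =>
    intro hne hp v hv
    cases X with
    | nil =>
      rcases List.mem_cons.mp hv with rfl | hv'
      · simp [List.getLast]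
      · simp at hv'
    | cons g X' =>
      have hX : (g :: X') ≠ [] := by simp
      rw [List.getLast_cons hX]
      rcases List.mem_cons.mp hv with rfl | hv'
      · have hmem := List.getLast_mem hX
        have := (List.pairwise_cons.mp hp).1 _ hmem
        linarith
      · exact ih hX (List.pairwise_cons.mp hp).2 v hv'

end glue

/-- Key inequality for the proof of the main theorem when E is semistable. -/
theorem statement11 (D F V E : List (ℤ × ℤ))
    (hD : IsHNDatum D) (hF : IsHNDatum F) (hV : IsHNDatum V)
    (hDne : D ≠ []) (hFne : F ≠ [])
    (hE : E = [(rk D + rk F, deg D + deg F)])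
    (h1 : StrongSlopewiseDom V D)
    (h2 : StrongSlopewiseDom (dual V) (dual F))
    (h3 : HNleSum V D F)
    (h4 : slope (D.head hDne) < ((deg D + deg F : ℤ) : ℚ) / ((rk D + rk F : ℤ) : ℚ))
    (h5 : ((deg D + deg F : ℤ) : ℚ) / ((rk D + rk F : ℤ) : ℚ) < slope (F.getLast hFne)) :
    delta D V + delta V F - delta D F - delta V V ≤ delta D F ∧
      (delta D V + delta V F - delta D F - delta V V = delta D F ↔ V = E) := by
  obtain ⟨hD1, hDp⟩ := hD
  obtain ⟨hF1, hFp⟩ := hF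
  obtain ⟨hV1, hVp⟩ := hV
  obtain ⟨hrk3, hdeg3, -⟩ := h3
  set μq : ℚ := ((deg D + deg F : ℤ) : ℚ) / ((rk D + rk F : ℤ) : ℚ) with hμq
  have hrkD := one_le_rk hD1 hDne
  have hrkF := one_le_rk hF1 hFne
  have hden : ((rk D + rk F : ℤ) : ℚ) ≠ 0 := by
    have h0 : (0:ℤ) < rk D + rk F := by omega
    exact_mod_cast h0.ne'
  have hA : ∀ x ∈ sigmaList D, x < μq := by
    intro x hx
    obtain ⟨v, hv, rfl⟩ := eq_slope_of_mem hx
    have h5' := head_max hDne hDp v hv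
    calc slope v ≤ slope (D.head hDne) := h5'
      _ < μq := h4
  have hB : ∀ y ∈ sigmaList F, μq < y := by
    intro y hy
    obtain ⟨v, hv, rfl⟩ := eq_slope_of_mem hy
    have h5' := getLast_min F hFne hFp v hv
    calc μq < slope (F.getLast hFne) := h5
      _ ≤ slope v := h5'
  have hBne : sigmaList F ≠ [] := by
    cases F with
    | nil => exact absurd rfl hFne
    | cons f F' =>
      exact List.ne_nil_of_mem (slope_mem_sigmaList (by simp) (hF1 f (by simp)))
  have hlenZ : ((sigmaList V).length : ℤ)
      = ((sigmaList D).length : ℤ) + ((sigmaList F).length : ℤ) := by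
    rw [sigma_length hV1, sigma_length hD1, sigma_length hF1]
    exact hrk3
  have hlen : ((sigmaList V).length : ℚ)
      = ((sigmaList D).length : ℚ) + ((sigmaList F).length : ℚ) := by
    exact_mod_cast hlenZ
  have hsum : (sigmaList V).sum = (sigmaList D).sum + (sigmaList F).sum := by
    rw [sigma_sum hV1, sigma_sum hD1, sigma_sum hF1, hdeg3]
    push_cast
    ring
  have hlenV : ((sigmaList V).length : ℚ) = ((rk D + rk F : ℤ) : ℚ) := by
    have h0 : ((sigmaList V).length : ℤ) = rk D + rk F := by
      rw [sigma_length hV1]; exact hrk3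
    exact_mod_cast h0
  have hμ : (sigmaList V).sum = ((sigmaList V).length : ℚ) * μq := by
    rw [sigma_sum hV1, hdeg3, hlenV, hμq]
    field_simp
  obtain ⟨hle, hiff⟩ := core (sigmaList D) (sigmaList F) (sigmaList V) μq hA hB hBne hlen hsum hμ
  have e1 := delta_eq_DL hD1 hV1
  have e2 := delta_eq_DL hV1 hF1
  have e3 := delta_eq_DL hD1 hF1
  have e4 := delta_eq_DL hV1 hV1
  constructor
  · have hq : ((delta D V + delta V F - delta D F - delta V V : ℤ) : ℚ)
        ≤ ((delta D F : ℤ) : ℚ) := by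
      push_cast
      rw [e1, e2, e3, e4]
      exact hle
    exact_mod_cast hq
  constructor
  · intro heq
    have hq : DL (sigmaList D) (sigmaList V) + DL (sigmaList V) (sigmaList F)
        - DL (sigmaList D) (sigmaList F) - DL (sigmaList V) (sigmaList V)
        = DL (sigmaList D) (sigmaList F) := by
      rw [← e1, ← e2, ← e3, ← e4]
      exact_mod_cast heq
    have hconst := hiff.mp hq
    have hVne : V ≠ [] := by
      intro hnil
      rw [hnil, rk_nil] at hrk3
      omega
    cases V with
    | nil => exact absurd rfl hVne
    | cons v V' =>
      cases V' with
      | cons w V'' =>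
        exfalso
        have h1v := hV1 v (by simp)
        have h1w := hV1 w (by simp)
        have hm1 : slope v ∈ sigmaList (v :: w :: V'') := slope_mem_sigmaList (by simp) h1v
        have hm2 : slope w ∈ sigmaList (v :: w :: V'') := slope_mem_sigmaList (by simp) h1w
        have hlt : slope w < slope v := (List.pairwise_cons.mp hVp).1 w (by simp)
        rw [hconst _ hm1, hconst _ hm2] at hlt
        exact lt_irrefl _ hlt
      | nil =>
        have hv1 : v.1 = rk D + rk F := by
          have hr : rk ([v] : List (ℤ × ℤ)) = v.1 := by simp [rk]
          rw [hr] at hrk3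
          omega
        have hv2 : v.2 = deg D + deg F := by
          have hd : deg ([v] : List (ℤ × ℤ)) = v.2 := by simp [deg]
          rw [hd] at hdeg3
          omega
        rw [hE]
        rcases v with ⟨a, b⟩
        simp only [List.cons.injEq, and_true]
        simp only at hv1 hv2
        rw [hv1, hv2]
  · intro hVE
    have hconst : ∀ z ∈ sigmaList V, z = μq := by
      rw [hVE, hE]
      intro z hz
      obtain ⟨v, hv, rfl⟩ := eq_slope_of_mem hz
      rw [List.mem_singleton] at hv
      rw [hv, hμq]
      rfl
    have hq := hiff.mpr hconst
    have hq2 : ((delta D V + delta V F - delta D F - delta V V : ℤ) : ℚ)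
        = ((delta D F : ℤ) : ℚ) := by
      push_cast
      rw [e1, e2, e3, e4]
      exact hq
    exact_mod_cast hq2

end HN
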